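/- The extension of an intensional strategy λ is the smallest closed set of derivations containing the finite support of the extension of λ (i.e., the topological closure of the set of finite derivations generated by λ). -/

import Mathlib

/-- A derivation over objects `O` and labels `L`: a partial function on ℕ whose
domain is an initial segment, with composable consecutive steps. -/
structure Deriv (O L : Type) where
  step : ℕ → Option (O × L × O)
  initial : ∀ i, step (i + 1) ≠ none → step i ≠ none
  comp : ∀ i s t, step i = some s → step (i + 1) = some t → t.1 = s.2.2

namespace Deriv
/-- Non-empty derivation. -/
def NE {O L : Type} (π : Deriv O L) : Prop := π.step 0 ≠ none
/-- Finite derivation. -/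
def Finite {O L : Type} (π : Deriv O L) : Prop := ∃ n, π.step n = none
/-- Derivation over the set of steps `Γ` of an ARS. -/
def Over {O L : Type} (Γ : Set (O × L × O)) (π : Deriv O L) : Prop :=
  ∀ i s, π.step i = some s → s ∈ Γ
end Deriv

/-- `π₀` is a prefix of `π`. -/
def DPrefix {O L : Type} (π₀ π : Deriv O L) : Prop :=
  ∀ i s, π₀.step i = some s → π.step i = some s

/-- History (trace) of the first `j` steps of a derivation. -/
def histD {O L : Type} (π : Deriv O L) (j : ℕ) : List (O × L) :=
  (List.range j).filterMap fun i => (π.step i).map fun s => (s.1, s.2.1)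

/-- Extension of an intensional strategy with memory. -/
def ExtOf {O L : Type} (lam : List (O × L) → O → Set (O × L × O)) : Set (Deriv O L) :=
  {π | π.NE ∧ ∀ j s, π.step j = some s → s ∈ lam (histD π j) s.1}

/-- Extension of a memoryless intensional strategy. -/
def MExtOf {O L : Type} (lam : O → Set (O × L × O)) : Set (Deriv O L) :=
  {π | π.NE ∧ ∀ j s, π.step j = some s → s ∈ lam s.1}

/-- Well-formedness of an intensional strategy with memory over the ARS `Γ`:
every chosen step has the current object as source and belongs to `Γ`. -/
def WfStrat {O L : Type} (Γ : Set (O × L × O))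
    (lam : List (O × L) → O → Set (O × L × O)) : Prop :=
  ∀ α a s, s ∈ lam α a → s.1 = a ∧ s ∈ Γ

/-- Well-formedness of a memoryless intensional strategy. -/
def MWfStrat {O L : Type} (Γ : Set (O × L × O)) (lam : O → Set (O × L × O)) : Prop :=
  ∀ a s, s ∈ lam a → s.1 = a ∧ s ∈ Γ

/-- `Γ` is a functional relation. -/
def FunctionalARS {O L : Type} (Γ : Set (O × L × O)) : Prop :=
  ∀ a φ b₁ b₂, (a, φ, b₁) ∈ Γ → (a, φ, b₂) ∈ Γ → b₁ = b₂

/-- `π` is a limit point of `ζ`: every finite non-empty prefix of `π` is a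
prefix of some member of `ζ`. -/
def LimPt {O L : Type} (ζ : Set (Deriv O L)) (π : Deriv O L) : Prop :=
  π.NE ∧ ∀ π₀ : Deriv O L, π₀.Finite → π₀.NE → DPrefix π₀ π → ∃ π' ∈ ζ, DPrefix π₀ π'

/-- `ζ` is closed: it contains all its limit points. -/
def ClosedStrat {O L : Type} (ζ : Set (Deriv O L)) : Prop :=
  ∀ π, LimPt ζ π → π ∈ ζ

/-- `ζ` is closed under non-empty prefixes. -/
def PrefClosed {O L : Type} (ζ : Set (Deriv O L)) : Prop :=
  ∀ π ∈ ζ, ∀ π₀ : Deriv O L, π₀.NE → DPrefix π₀ π → π₀ ∈ ζ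

lemma step_ne_none_of_le {O L : Type} (π : Deriv O L) :
    ∀ j i, i ≤ j → π.step j ≠ none → π.step i ≠ none := by
  intro j
  induction j with
  | zero => intro i hi h; simpa [Nat.le_zero.mp hi] using h
  | succ n ih =>
    intro i hi h
    rcases eq_or_lt_of_le hi with h' | h'
    · rwa [h']
    · exact ih i (Nat.lt_succ_iff.mp h') (π.initial n h)

def trunc {O L : Type} (π : Deriv O L) (n : ℕ) : Deriv O L where
  step i := if i < n then π.step i else none
  initial := by
    intro i h
    try simp only at h ⊢
    split at h
    · next hlt =>
      rw [if_pos (Nat.lt_of_succ_lt hlt)]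
      exact π.initial i h
    · exact absurd rfl h
  comp := by
    intro i s t hs ht
    try simp only at hs ht
    split at hs
    · split at ht
      · exact π.comp i s t hs ht
      · exact absurd ht (by simp)
    · exact absurd hs (by simp)

lemma histD_eq {O L : Type} {π π' : Deriv O L} (j : ℕ)
    (h : ∀ i, i < j → π.step i = π'.step i) : histD π j = histD π' j := by
  unfold histD
  apply List.filterMap_congr
  intro a ha
  rw [h a (List.mem_range.mp ha)]

/-- the extension of an intensional strategy is the smallest
closed set of derivations containing its finite support. -/
theorem extension_is_closure_of_finite_support
    (O L : Type) (Γ : Set (O × L × O)) (hΓ : FunctionalARS Γ)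
    (lam : List (O × L) → O → Set (O × L × O)) (hwf : WfStrat Γ lam) :
    ClosedStrat (ExtOf lam) ∧
    {π ∈ ExtOf lam | π.Finite} ⊆ ExtOf lam ∧
    ∀ ζ : Set (Deriv O L), ClosedStrat ζ → {π ∈ ExtOf lam | π.Finite} ⊆ ζ →
      ExtOf lam ⊆ ζ := by
  refine ⟨?_, fun π hπ => hπ.1, ?_⟩
  · intro π hπ
    obtain ⟨hne, hlim⟩ := hπ
    refine ⟨hne, ?_⟩
    intro j s hjs
    have htr_pref : DPrefix (trunc π (j+1)) π := by
      intro i t ht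
      simp only [trunc] at ht
      split at ht
      · exact ht
      · simp at ht
    have htr_fin : (trunc π (j+1)).Finite := ⟨j+1, by simp [trunc]⟩
    have htr_ne : (trunc π (j+1)).NE := by
      simp only [Deriv.NE, trunc]
      rw [if_pos (Nat.succ_pos j)]
      exact step_ne_none_of_le π j 0 (Nat.zero_le j) (by simp [hjs])
    obtain ⟨π', hπ', hpref⟩ := hlim _ htr_fin htr_ne htr_pref
    have hagree : ∀ i, i ≤ j → π'.step i = π.step i := by
      intro i hi
      have h1 : π.step i ≠ none := step_ne_none_of_le π j i hi (by simp [hjs])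
      obtain ⟨t, ht⟩ := Option.ne_none_iff_exists'.mp h1
      have h2 : (trunc π (j+1)).step i = some t := by
        simp only [trunc]
        rw [if_pos (Nat.lt_succ_of_le hi)]
        exact ht
      rw [hpref i t h2, ht]
    have hhist : histD π' j = histD π j :=
      histD_eq j (fun i hi => hagree i (le_of_lt hi))
    have hs' : π'.step j = some s := by rw [hagree j le_rfl]; exact hjs
    have := hπ'.2 j s hs'
    rwa [hhist] at this
  · intro ζ hcl hsub π hπ
    apply hcl
    refine ⟨hπ.1, ?_⟩
    intro π₀ hfin hne hpref
    refine ⟨π₀, hsub ⟨⟨hne, ?_⟩, hfin⟩, fun i s h => h⟩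
    intro j s hjs
    have hhist : histD π₀ j = histD π j := by
      apply histD_eq
      intro i hi
      have h1 : π₀.step i ≠ none :=
        step_ne_none_of_le π₀ j i (le_of_lt hi) (by simp [hjs])
      obtain ⟨t, ht⟩ := Option.ne_none_iff_exists'.mp h1
      rw [ht, hpref i t ht]
    have := hπ.2 j s (hpref j s hjs)
    rwa [hhist]
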